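/- Any k-ary operator of the following form is unbiased: given arguments x^(1), ..., x^(k) ∈ {0,1}^n, compute the index-set partition S_0, ..., S_{2^{k-1}-1} and sizes n_j = |S_j|; choose numbers d_j with 0 ≤ d_j ≤ n_j depending only on (n_0, ..., n_{2^{k-1}-1}); choose for each j a uniformly random subset F_j ⊆ S_j with |F_j| = d_j; and output the string y that differs from x^(1) exactly on F = ∪_j F_j. Then P_X(y | x^(1),...,x^(k)) = P_X(y ⊕ z | x^(1) ⊕ z,...,x^(k) ⊕ z) for all z, and P_X(y | x^(1),...,x^(k)) = P_X(π(y) | π(x^(1)),...,π(x^(k))) for all permutations π. -/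

import Mathlib

/-- Group index of a bit position `i` w.r.t. arguments `x 0, …, x (k-1)`:
`j = Σ_{t=1}^{k-1} 2^(t-1) · [x 0 i ≠ x t i]` (0-indexed version of the paper's
`Σ_{t=2}^{k} 2^(t-2) · [x⁽¹⁾_i ≠ x⁽ᵗ⁾_i]`). -/
def grpIdx {n k : ℕ} [NeZero k] (x : Fin k → Fin n → Bool) (i : Fin n) : ℕ :=
  ∑ t : Fin k, if t ≠ 0 ∧ x 0 i ≠ x t i then 2 ^ ((t : ℕ) - 1) else 0

/-- The index set `S_j`. -/
def grpSet {n k : ℕ} [NeZero k] (x : Fin k → Fin n → Bool) (j : ℕ) : Finset (Fin n) :=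
  Finset.univ.filter (fun i => grpIdx x i = j)

/-- Applying a coordinate permutation `π` to a bit string. -/
def permStr {n : ℕ} (π : Equiv.Perm (Fin n)) (s : Fin n → Bool) : Fin n → Bool :=
  fun j => s (π.symm j)

/-- The conditional distribution of the operator of Lemma 1 (the "general form"):
given the group sizes `n_j = |S_j|`, numbers `d (n_·) j ≤ n_j` are chosen depending
only on the sizes; a uniformly random `d_j`-element subset `F_j ⊆ S_j` is chosen
in each group, and the output differs from `x 0` exactly on `∪ F_j`.  The
probability of producing `y` is the product over groups of
`1 / C(n_j, d_j)` if `y` differs from `x 0` in exactly `d_j` positions of `S_j`,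
and `0` otherwise. -/
noncomputable def opProb {n k : ℕ} [NeZero k] (d : (ℕ → ℕ) → ℕ → ℕ)
    (x : Fin k → Fin n → Bool) (y : Fin n → Bool) : ℝ :=
  ∏ j ∈ Finset.range (2 ^ (k - 1)),
    if ((grpSet x j).filter (fun i => y i ≠ x 0 i)).card
        = d (fun j' => (grpSet x j').card) j
    then 1 / (Nat.choose (grpSet x j).card (d (fun j' => (grpSet x j').card) j) : ℝ)
    else 0

lemma grpIdx_xor {n k : ℕ} [NeZero k] (x : Fin k → Fin n → Bool) (z : Fin n → Bool)
    (i : Fin n) : grpIdx (fun t i => xor (x t i) (z i)) i = grpIdx x i := by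
  unfold grpIdx
  have h : ∀ a b c : Bool, (xor a c ≠ xor b c) = (a ≠ b) := by decide
  simp only [h]

lemma grpSet_xor {n k : ℕ} [NeZero k] (x : Fin k → Fin n → Bool) (z : Fin n → Bool)
    (j : ℕ) : grpSet (fun t i => xor (x t i) (z i)) j = grpSet x j := by
  unfold grpSet
  simp [grpIdx_xor]

lemma grpIdx_perm {n k : ℕ} [NeZero k] (x : Fin k → Fin n → Bool) (π : Equiv.Perm (Fin n))
    (i : Fin n) : grpIdx (fun t => permStr π (x t)) i = grpIdx x (π.symm i) := rfl

lemma grpSet_perm {n k : ℕ} [NeZero k] (x : Fin k → Fin n → Bool) (π : Equiv.Perm (Fin n))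
    (j : ℕ) : grpSet (fun t => permStr π (x t)) j = (grpSet x j).map π.toEmbedding := by
  ext i
  simp [grpSet, grpIdx_perm, Finset.mem_map, Equiv.toEmbedding]
  constructor
  · intro h; exact (Finset.mem_filter.mp h).2
  · intro h; exact Finset.mem_filter.mpr ⟨Finset.mem_univ _, h⟩

/-- Any operator of the general form of Lemma 1 is unbiased: its conditional
distribution is invariant under common XOR-shifts and coordinate permutations. -/
theorem stmt_5 (n k : ℕ) [NeZero k] (d : (ℕ → ℕ) → ℕ → ℕ)
    (hd : ∀ (sizes : ℕ → ℕ) (j : ℕ), d sizes j ≤ sizes j) :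
    (∀ (x : Fin k → Fin n → Bool) (y z : Fin n → Bool),
        opProb d x y
          = opProb d (fun t i => xor (x t i) (z i)) (fun i => xor (y i) (z i))) ∧
    (∀ (x : Fin k → Fin n → Bool) (y : Fin n → Bool) (π : Equiv.Perm (Fin n)),
        opProb d x y = opProb d (fun t => permStr π (x t)) (permStr π y)) := by
  constructor
  · intro x y z
    unfold opProb
    refine Finset.prod_congr rfl fun j _ => ?_
    rw [grpSet_xor]
    have hf : ((grpSet x j).filter (fun i => xor (y i) (z i) ≠ xor (x 0 i) (z i)))
        = (grpSet x j).filter (fun i => y i ≠ x 0 i) := by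
      refine Finset.filter_congr fun i _ => ?_
      cases y i <;> cases x 0 i <;> cases z i <;> simp
    simp only [grpSet_xor, hf]
  · intro x y π
    unfold opProb
    refine Finset.prod_congr rfl fun j _ => ?_
    simp [grpSet_perm, Finset.filter_map, Finset.card_map, permStr, Function.comp_def]
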